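/- arXiv:1210.0974 — 2 statements merged into one kernel-verified Lean document; each statement's English description precedes it below -/
import Mathlib

section
/- Let ω = e^{iπ/4}. For all x, y, z ∈ {0,1}, (−1)^{xyz} = ω^x · ω^y · ω^z · ω̄^{x⊕y} · ω̄^{y⊕z} · ω̄^{x⊕z} · ω^{x⊕y⊕z}, where ω̄ is the complex conjugate of ω and ⊕ is XOR. -/
open Complex in
theorem stmt_3 (x y z : ℤ) (hx : x = 0 ∨ x = 1) (hy : y = 0 ∨ y = 1)
    (hz : z = 0 ∨ z = 1) :
    let ω : ℂ := Complex.exp (Complex.I * Real.pi / 4)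
    (-1 : ℂ) ^ (x * y * z) =
      ω ^ x * ω ^ y * ω ^ z *
        (starRingEnd ℂ ω) ^ (x + y - 2 * x * y) *
        (starRingEnd ℂ ω) ^ (y + z - 2 * y * z) *
        (starRingEnd ℂ ω) ^ (x + z - 2 * x * z) *
        ω ^ ((x + y - 2 * x * y) + z - 2 * (x + y - 2 * x * y) * z) := by
  intro ω
  have hne : ω ≠ 0 := Complex.exp_ne_zero _
  have hconj : starRingEnd ℂ ω = ω⁻¹ := by
    rw [show ω = Complex.exp (Complex.I * Real.pi / 4) from rfl, ← Complex.exp_conj,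
      ← Complex.exp_neg]
    congr 1
    rw [map_div₀, map_mul, Complex.conj_I, Complex.conj_ofReal,
      map_ofNat (starRingEnd ℂ) 4]
    ring
  have h4 : ω ^ (4 : ℕ) = -1 := by
    have : ω ^ (4 : ℤ) = -1 := by
      rw [show ω = Complex.exp (Complex.I * Real.pi / 4) from rfl, ← Complex.exp_int_mul,
        show (4 : ℤ) * (Complex.I * Real.pi / 4) = Real.pi * Complex.I by push_cast; ring]
      exact Complex.exp_pi_mul_I
    rwa [show (4 : ℤ) = ((4 : ℕ) : ℤ) from rfl, zpow_natCast] at this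
  rw [hconj]
  rcases hx with rfl | rfl <;> rcases hy with rfl | rfl <;> rcases hz with rfl | rfl <;>
    (try norm_num) <;> (try field_simp) <;>
    first
      | rfl
      | rw [div_self hne]
      | linear_combination -h4
end

section
/- Let ω = e^{iπ/4}. For all x, y, z ∈ {0,1}, (−1)^{xyz} · (−i)^{xy} = ω^z · ω̄^{y⊕z} · ω̄^{x⊕z} · ω^{x⊕y⊕z}. -/
theorem stmt_5 (x y z : ℤ) (hx : x = 0 ∨ x = 1) (hy : y = 0 ∨ y = 1)
    (hz : z = 0 ∨ z = 1) :
    let ω : ℂ := Complex.exp (Complex.I * Real.pi / 4)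
    (-1 : ℂ) ^ (x * y * z) * (-Complex.I) ^ (x * y) =
      ω ^ z *
        (starRingEnd ℂ ω) ^ (y + z - 2 * y * z) *
        (starRingEnd ℂ ω) ^ (x + z - 2 * x * z) *
        ω ^ ((x + y - 2 * x * y) + z - 2 * (x + y - 2 * x * y) * z) := by
  intro ω
  have hc : starRingEnd ℂ ω = Complex.exp (-(Complex.I * Real.pi / 4)) := by
    rw [← Complex.exp_conj]
    congr 1
    rw [map_div₀, map_mul, Complex.conj_I, Complex.conj_ofReal, map_ofNat]
    ring
  have hmul : ω * starRingEnd ℂ ω = 1 := by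
    rw [hc, ← Complex.exp_add]; simp
  have h2 : ω * ω = Complex.I := by
    show Complex.exp _ * Complex.exp _ = _
    rw [← Complex.exp_add]
    have : Complex.I * (Real.pi:ℂ) / 4 + Complex.I * Real.pi / 4 = (Real.pi/2 : ℝ) * Complex.I := by
      push_cast; ring
    rw [this, Complex.exp_mul_I]
    simp
  have h2c : starRingEnd ℂ ω * starRingEnd ℂ ω = -Complex.I := by
    rw [← map_mul, h2]; simp
  rcases hx with rfl | rfl <;> rcases hy with rfl | rfl <;> rcases hz with rfl | rfl <;>
    norm_num [h2, h2c, hmul] <;> linear_combination -hmul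
end
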